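/- Let (F, ≺) be an IS-family with minimum element sm(F) and E_x the set of elements of excess at most x. Then |⋃_{S ∈ E_x} S| ≤ 2^{x+1} · |sm(F)|. -/

import Mathlib

/-- A family of subsets of a finite set `V` with a strict partial order. -/
structure ISFamily (V : Type*) [DecidableEq V] [Fintype V] where
  F : Finset (Finset V)
  prec : Finset V → Finset V → Prop
  prec_trans : ∀ {a b c : Finset V}, prec a b → prec b c → prec a c
  prec_irrefl : ∀ a : Finset V, ¬ prec a a

namespace ISFamily

variable {V : Type*} [DecidableEq V] [Fintype V] (Fam : ISFamily V)

/-- The immediate predecessors of `S` in the family. -/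
def Pred (S : Finset V) : Set (Finset V) :=
  {S' | S' ∈ Fam.F ∧ Fam.prec S' S ∧
    ¬ ∃ S'' ∈ Fam.F, Fam.prec S' S'' ∧ Fam.prec S'' S}

/-- `S'` covers `v` if some member of the family preceding `S'` contains `v` while
`S'` does not. -/
def Covers (S' : Finset V) (v : V) : Prop :=
  ∃ S'' ∈ Fam.F, Fam.prec S'' S' ∧ v ∈ S'' ∧ v ∉ S'

/-- The visible set of `S`: vertices belonging to some immediate predecessor of `S`
and not covered by any immediate predecessor of `S`. -/
def Vis (S : Finset V) : Set V :=
  {v | (∃ S' ∈ Fam.Pred S, v ∈ S') ∧ ∀ S' ∈ Fam.Pred S, ¬ Fam.Covers S' v}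

/-- `hat S = S \ ⋃_{S' ≺ S} S'`. -/
def hat (S : Finset V) : Set V :=
  ↑S \ ⋃ S' ∈ {S' | S' ∈ Fam.F ∧ Fam.prec S' S}, (↑S' : Set V)

/-- `W` is a witness of `v` w.r.t. `S`: a minimal element of the family with
`S ≺ W` and `v ∉ W`. -/
def IsWitness (S : Finset V) (v : V) (W : Finset V) : Prop :=
  W ∈ Fam.F ∧ Fam.prec S W ∧ v ∉ W ∧
    ∀ W' ∈ Fam.F, Fam.prec S W' → v ∉ W' → ¬ Fam.prec W' W

/-- The axioms making `(F, ≺)` an IS-family with smallest element `sm`. -/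
structure IsIS (sm : Finset V) : Prop where
  sm_mem : sm ∈ Fam.F
  SE : ∀ S ∈ Fam.F, S ≠ sm → Fam.prec sm S
  SM : ∀ S₁ ∈ Fam.F, ∀ S₂ ∈ Fam.F, Fam.prec S₁ S₂ → S₁.card < S₂.card
  SW : ∀ S ∈ Fam.F, ∀ v ∈ S, ∀ W₁ W₂ : Finset V,
    Fam.IsWitness S v W₁ → Fam.IsWitness S v W₂ → W₁ = W₂
  TE : ∀ S₁ ∈ Fam.F, ∀ S₂ ∈ Fam.F, ∀ S₃ ∈ Fam.F,
    Fam.prec S₁ S₂ → Fam.prec S₂ S₃ → ∀ v ∈ S₁, v ∉ S₂ → v ∉ S₃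
  LVS : ∀ S ∈ Fam.F, ∀ S' ∈ Fam.Pred S, S'.card ≤ (Fam.Vis S).ncard
  DVS : ∀ S ∈ Fam.F, S ≠ sm → ¬ (Fam.Vis S ⊆ ↑S)

/-- The excess of `S` relative to the smallest element `sm`. -/
def ex (sm S : Finset V) : ℕ := S.card - sm.card

/-- The members of the family of excess at most `x`. -/
def Ex (sm : Finset V) (x : ℕ) : Finset (Finset V) :=
  Fam.F.filter (fun S => ex sm S ≤ x)

/-- The `x`-hat of `S`: elements of `hat S` not excluded by any member of `E_x`
succeeding `S`. -/
def hatx (sm : Finset V) (x : ℕ) (S : Finset V) : Set V :=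
  {v ∈ Fam.hat S | ¬ ∃ S' ∈ Fam.Ex sm x, Fam.prec S S' ∧ v ∉ S'}

/-- `M(x) = Σ_{S ∈ E_x} 2^{x - ex(S)} · |hat_x(S)|`. -/
noncomputable def M (sm : Finset V) (x : ℕ) : ℕ :=
  ∑ S ∈ Fam.Ex sm x, 2 ^ (x - ex sm S) * (Fam.hatx sm x S).ncard

end ISFamily

namespace VB
open ISFamily

variable {V : Type*} [DecidableEq V] [Fintype V] {Fam : ISFamily V} {sm : Finset V}

lemma mem_hat {S : Finset V} {v : V} :
    v ∈ Fam.hat S ↔ v ∈ S ∧ ∀ Z ∈ Fam.F, Fam.prec Z S → v ∉ Z := by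
  simp [ISFamily.hat, Set.mem_diff, Set.mem_setOf_eq]


lemma mem_hatx {x : ℕ} {S : Finset V} {v : V} :
    v ∈ Fam.hatx sm x S ↔ v ∈ Fam.hat S ∧ ¬ ∃ S' ∈ Fam.Ex sm x, Fam.prec S S' ∧ v ∉ S' :=
  Iff.rfl

lemma mem_Ex {x : ℕ} {S : Finset V} :
    S ∈ Fam.Ex sm x ↔ S ∈ Fam.F ∧ ex sm S ≤ x := Finset.mem_filter

lemma card_le_of_mem (hIS : Fam.IsIS sm) {S : Finset V} (hS : S ∈ Fam.F) :
    sm.card ≤ S.card := by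
  by_cases h : S = sm
  · simp [h]
  · exact le_of_lt (hIS.SM sm hIS.sm_mem S hS (hIS.SE S hS h))

lemma card_eq (hIS : Fam.IsIS sm) {S : Finset V} (hS : S ∈ Fam.F) :
    S.card = sm.card + ex sm S := by
  have := card_le_of_mem hIS hS
  unfold ISFamily.ex
  omega

lemma ex_lt (hIS : Fam.IsIS sm) {S T : Finset V} (hS : S ∈ Fam.F) (hT : T ∈ Fam.F)
    (h : Fam.prec T S) : ex sm T < ex sm S := by
  have h1 := hIS.SM T hT S hS h
  have h2 := card_le_of_mem hIS hT
  unfold ISFamily.ex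
  omega

end VB
namespace VB2
open ISFamily VB

variable {V : Type*} [DecidableEq V] [Fintype V] {Fam : ISFamily V} {sm : Finset V}

/-- There is a witness of `(S,v)` weakly below any `S' ∈ F` with `S ≺ S'`, `v ∉ S'`. -/
lemma exists_witness_below (hIS : Fam.IsIS sm) {S S' : Finset V} {v : V}
    (hS' : S' ∈ Fam.F) (hp : Fam.prec S S') (hv : v ∉ S') :
    ∃ W ∈ Fam.F, Fam.IsWitness S v W ∧ W.card ≤ S'.card := by
  classical
  set Q := Fam.F.filter (fun Z => (Z = S' ∨ Fam.prec Z S') ∧ Fam.prec S Z ∧ v ∉ Z) with hQ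
  have hS'Q : S' ∈ Q := by simp [hQ, hS', hp, hv]
  obtain ⟨W, hWQ, hWmin⟩ := Finset.exists_min_image Q Finset.card ⟨S', hS'Q⟩
  simp only [hQ, Finset.mem_filter] at hWQ
  obtain ⟨hWF, hWle, hSW, hvW⟩ := hWQ
  refine ⟨W, hWF, ⟨hWF, hSW, hvW, ?_⟩, ?_⟩
  · intro W' hW'F hSW' hvW' hW'W
    have hW'S' : W' = S' ∨ Fam.prec W' S' := by
      rcases hWle with h | h
      · exact Or.inr (h ▸ hW'W)
      · exact Or.inr (Fam.prec_trans hW'W h)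
    have hW'Q : W' ∈ Q := by simp [hQ, hW'F, hW'S', hSW', hvW']
    have := hWmin W' hW'Q
    have := hIS.SM W' hW'F W hWF hW'W
    omega
  · rcases hWle with h | h
    · simp [h]
    · exact le_of_lt (hIS.SM W hWF S' hS' h)

/-- Any strict predecessor of `S` extends to an immediate predecessor. -/
lemma exists_pred_above (hIS : Fam.IsIS sm) {S W' : Finset V}
    (hW' : W' ∈ Fam.F) (hp : Fam.prec W' S) :
    ∃ T ∈ Fam.Pred S, (W' = T ∨ Fam.prec W' T) := by
  classical
  set Q := Fam.F.filter (fun Z => (W' = Z ∨ Fam.prec W' Z) ∧ Fam.prec Z S) with hQ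
  have hW'Q : W' ∈ Q := by simp [hQ, hW', hp]
  obtain ⟨T, hTQ, hTmax⟩ := Finset.exists_max_image Q Finset.card ⟨W', hW'Q⟩
  simp only [hQ, Finset.mem_filter] at hTQ
  obtain ⟨hTF, hWT, hTS⟩ := hTQ
  refine ⟨T, ⟨hTF, hTS, ?_⟩, hWT⟩
  rintro ⟨Z, hZF, hTZ, hZS⟩
  have hZQ : Z ∈ Q := by
    have : W' = Z ∨ Fam.prec W' Z := by
      rcases hWT with h | h
      · exact Or.inr (h ▸ hTZ)
      · exact Or.inr (Fam.prec_trans h hTZ)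
    simp [hQ, hZF, this, hZS]
  have := hTmax Z hZQ
  have := hIS.SM T hTF Z hZF hTZ
  omega

end VB2
namespace VB3
open ISFamily VB VB2

variable {V : Type*} [DecidableEq V] [Fintype V] {Fam : ISFamily V} {sm : Finset V}

/-- Core structure lemma: for `u ∈ Vis S \ S` there is `T ∈ Pred S` and `T₀ ⪯ T`
with `u ∈ hat T₀`, `S` the witness of `(T₀, u)`, and all sets of `F` above `T₀`
missing `u` at least as large as `S`. -/
lemma vis_structure (hIS : Fam.IsIS sm) {S : Finset V} (hS : S ∈ Fam.F) {u : V}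
    (hu : u ∈ Fam.Vis S) (huS : u ∉ S) :
    ∃ T T₀ : Finset V, T ∈ Fam.Pred S ∧ T₀ ∈ Fam.F ∧ Fam.prec T₀ S ∧
      u ∈ Fam.hat T₀ ∧ ex sm T₀ ≤ ex sm T ∧ Fam.IsWitness T₀ u S ∧
      (∀ W ∈ Fam.F, Fam.prec T₀ W → u ∉ W → S.card ≤ W.card) := by
  classical
  obtain ⟨⟨T, hTpred, huT⟩, hnc⟩ := hu
  -- T₀ : minimal-cardinality member of F weakly below T containing u
  set Q := Fam.F.filter (fun Z => (Z = T ∨ Fam.prec Z T) ∧ u ∈ Z) with hQ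
  have hTF : T ∈ Fam.F := hTpred.1
  have hTQ : T ∈ Q := by simp [hQ, hTF, huT]
  obtain ⟨T₀, hT₀Q, hT₀min⟩ := Finset.exists_min_image Q Finset.card ⟨T, hTQ⟩
  simp only [hQ, Finset.mem_filter] at hT₀Q
  obtain ⟨hT₀F, hT₀le, huT₀⟩ := hT₀Q
  have hT₀S : Fam.prec T₀ S := by
    rcases hT₀le with h | h
    · exact h ▸ hTpred.2.1
    · exact Fam.prec_trans h hTpred.2.1
  have hT₀cardle : T₀.card ≤ T.card := by
    rcases hT₀le with h | h
    · simp [h]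
    · exact le_of_lt (hIS.SM T₀ hT₀F T hTF h)
  have hhat : u ∈ Fam.hat T₀ := by
    rw [mem_hat]
    refine ⟨huT₀, fun Z hZF hZT₀ huZ => ?_⟩
    have hZQ : Z ∈ Q := by
      have : Z = T ∨ Fam.prec Z T := by
        rcases hT₀le with h | h
        · exact Or.inr (h ▸ hZT₀)
        · exact Or.inr (Fam.prec_trans hZT₀ h)
      simp [hQ, hZF, this, huZ]
    have := hT₀min Z hZQ
    have := hIS.SM Z hZF T₀ hT₀F hZT₀
    omega
  -- S is a witness of (T₀, u)
  have hwit : Fam.IsWitness T₀ u S := by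
    refine ⟨hS, hT₀S, huS, ?_⟩
    intro W' hW'F hT₀W' huW' hW'S
    obtain ⟨T', hT'pred, hW'T'⟩ := exists_pred_above hIS hW'F hW'S
    have hT₀T' : Fam.prec T₀ T' := by
      rcases hW'T' with h | h
      · exact h ▸ hT₀W'
      · exact Fam.prec_trans hT₀W' h
    by_cases huT' : u ∈ T'
    · -- then W' ≺ T' and TE gives u ∉ T'
      have hW'ne : W' ≠ T' := fun h => huW' (h ▸ huT')
      have hW'T'' : Fam.prec W' T' := by
        rcases hW'T' with h | h
        · exact absurd h hW'ne
        · exact h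
      exact (hIS.TE T₀ hT₀F W' hW'F T' hT'pred.1 hT₀W' hW'T'' u huT₀ huW') huT'
    · -- then T' is covered by T₀, contradicting u ∈ Vis S
      exact hnc T' hT'pred ⟨T₀, hT₀F, hT₀T', huT₀, huT'⟩
  refine ⟨T, T₀, hTpred, hT₀F, hT₀S, hhat, ?_, hwit, ?_⟩
  · unfold ISFamily.ex; omega
  · intro W hWF hT₀W huW
    by_contra hlt
    push_neg at hlt
    obtain ⟨W₀, hW₀F, hW₀wit, hW₀card⟩ := exists_witness_below hIS hWF hT₀W huW
    have heq := hIS.SW T₀ hT₀F u huT₀ W₀ S hW₀wit hwit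
    rw [heq] at hW₀card
    omega

end VB3
namespace VB4
open ISFamily VB VB2 VB3

variable {V : Type*} [DecidableEq V] [Fintype V] {Fam : ISFamily V} {sm : Finset V}

/-- KEY charging lemma: the hats of the sets of excess exactly `x+1` are paid for by
vertices removed from `hatx x` when passing to `hatx (x+1)`. -/
lemma key (hIS : Fam.IsIS sm) (x : ℕ) :
    ∑ S ∈ Fam.F.filter (fun S => ex sm S = x + 1), (Fam.hat S).ncard ≤
    ∑ T ∈ Fam.Ex sm x,
      2 ^ (x + 1 - ex sm T) * (Fam.hatx sm x T \ Fam.hatx sm (x + 1) T).ncard := by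
  classical
  set D := Fam.F.filter (fun S => ex sm S = x + 1) with hD
  set A : Finset V → Finset V := fun S => (Set.toFinite (Fam.Vis S \ ↑S)).toFinset with hA
  -- choice of (T₀, pred T) for each pair (S, u)
  have H : ∀ S u, ∃ P : Finset V × Finset V, S ∈ D → u ∈ A S →
      (P.1 ∈ Fam.F ∧ ex sm P.1 ≤ x) ∧ u ∈ P.1 ∧
      u ∈ Fam.hatx sm x P.1 ∧ u ∉ Fam.hatx sm (x + 1) P.1 ∧
      Fam.IsWitness P.1 u S ∧ P.2 ∈ Fam.Pred S ∧ ex sm P.1 ≤ ex sm P.2 := by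
    intro S u
    by_cases hcond : S ∈ D ∧ u ∈ A S
    · obtain ⟨hSD, huA⟩ := hcond
      rw [hD, Finset.mem_filter] at hSD
      obtain ⟨hS, hexS⟩ := hSD
      rw [hA, Set.Finite.mem_toFinset, Set.mem_diff] at huA
      obtain ⟨huVis, huS'⟩ := huA
      have huS : u ∉ S := by simpa using huS'
      obtain ⟨T, T₀, hTpred, hT₀F, hT₀S, hhat, hexle, hwit, hbig⟩ :=
        vis_structure hIS hS huVis huS
      have hexT₀ : ex sm T₀ ≤ x := by
        have := ex_lt hIS hS hT₀F hT₀S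
        omega
      have huT₀ : u ∈ T₀ := (mem_hat.mp hhat).1
      refine ⟨(T₀, T), fun _ _ => ⟨⟨hT₀F, hexT₀⟩, huT₀, ⟨hhat, ?_⟩, ?_, hwit, hTpred, ?_⟩⟩
      · rintro ⟨W, hWEx, hT₀W, huW⟩
        rw [mem_Ex] at hWEx
        have h1 := hbig W hWEx.1 hT₀W huW
        have h2 := card_eq hIS hWEx.1
        have h3 := card_eq hIS hS
        omega
      · intro hmem
        exact (mem_hatx.mp hmem).2 ⟨S, mem_Ex.mpr ⟨hS, by omega⟩, hT₀S, huS⟩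
      · have h1 := ex_lt hIS hS hT₀F hT₀S
        exact hexle
    · exact ⟨(∅, ∅), fun h1 h2 => absurd ⟨h1, h2⟩ hcond⟩
  choose t ht using H
  -- per-S bound
  have perS : ∀ S ∈ D, (Fam.hat S).ncard ≤
      ∑ u ∈ A S, 2 ^ (x + 1 - ex sm (t S u).1) := by
    intro S hSD
    have hSD' := hSD
    rw [hD, Finset.mem_filter] at hSD'
    obtain ⟨hS, hexS⟩ := hSD'
    have hSne : S ≠ sm := by
      intro h
      rw [h] at hexS
      simp [ISFamily.ex] at hexS
    obtain ⟨u0, hu0Vis, hu0S⟩ : ∃ u, u ∈ Fam.Vis S ∧ u ∉ ↑S := by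
      have h := hIS.DVS S hS hSne
      rw [Set.not_subset] at h
      obtain ⟨u, h1, h2⟩ := h
      exact ⟨u, h1, h2⟩
    have hu0A : u0 ∈ A S := by
      rw [hA, Set.Finite.mem_toFinset]
      exact ⟨hu0Vis, hu0S⟩
    obtain ⟨hP1, hu0P1, hmemx, hnmemx1, hwit, hpred, hexle⟩ := ht S u0 hSD hu0A
    set Tp := (t S u0).2 with hTp
    have hTpF : Tp ∈ Fam.F := hpred.1
    have hTpS : Fam.prec Tp S := hpred.2.1
    have heTp : ex sm Tp ≤ x := by
      have := ex_lt hIS hS hTpF hTpS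
      omega
    have hLVS := hIS.LVS S hS Tp hpred
    -- |hat S| + |Vis S ∩ S| ≤ |S|
    have hsub : Fam.hat S ⊆ ↑S \ (Fam.Vis S ∩ ↑S) := by
      intro v hv
      rw [mem_hat] at hv
      refine ⟨hv.1, ?_⟩
      rintro ⟨hvVis, -⟩
      obtain ⟨T', hT'pred, hvT'⟩ := hvVis.1
      exact hv.2 T' hT'pred.1 hT'pred.2.1 hvT'
    have h1 : (Fam.hat S).ncard + (Fam.Vis S ∩ ↑S).ncard ≤ sm.card + (x + 1) := by
      have hd := Set.ncard_diff_add_ncard_of_subset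
        (Set.inter_subset_right (s := Fam.Vis S) (t := (↑S : Set V))) (Set.toFinite _)
      have hm := Set.ncard_le_ncard hsub (Set.toFinite _)
      have hcS := card_eq hIS hS
      have : ((↑S : Set V)).ncard = S.card := Set.ncard_coe_finset S
      omega
    have h2 : (Fam.Vis S ∩ ↑S).ncard + (Fam.Vis S \ ↑S).ncard = (Fam.Vis S).ncard :=
      Set.ncard_inter_add_ncard_diff_eq_ncard _ _ (Set.toFinite _)
    have h3 : (A S).card = (Fam.Vis S \ ↑S).ncard := by
      rw [hA, Set.ncard_eq_toFinset_card _ (Set.toFinite _)]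
    have hTpcard : Tp.card = sm.card + ex sm Tp := card_eq hIS hTpF
    -- a ≤ (x+1 - ex Tp) + |A S|
    have hmain : (Fam.hat S).ncard + ex sm Tp ≤ (x + 1) + (A S).card := by omega
    -- weights
    have hw0 : 2 ^ (x + 1 - ex sm Tp) ≤ 2 ^ (x + 1 - ex sm (t S u0).1) :=
      Nat.pow_le_pow_right (by norm_num) (by omega)
    have hwall : ∀ u ∈ A S, 2 ≤ 2 ^ (x + 1 - ex sm (t S u).1) := by
      intro u huA
      obtain ⟨⟨_, hex⟩, -⟩ := ht S u hSD huA
      calc (2 : ℕ) = 2 ^ 1 := rfl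
        _ ≤ 2 ^ (x + 1 - ex sm (t S u).1) := Nat.pow_le_pow_right (by norm_num) (by omega)
    have hsum : 2 ^ (x + 1 - ex sm (t S u0).1) + 2 * ((A S).card - 1) ≤
        ∑ u ∈ A S, 2 ^ (x + 1 - ex sm (t S u).1) := by
      rw [← Finset.add_sum_erase _ _ hu0A]
      have hcard : ((A S).erase u0).card = (A S).card - 1 := Finset.card_erase_of_mem hu0A
      have hlow : ((A S).erase u0).card • 2 ≤
          ∑ u ∈ (A S).erase u0, 2 ^ (x + 1 - ex sm (t S u).1) :=
        Finset.card_nsmul_le_sum _ _ _ (fun u hu => hwall u (Finset.mem_of_mem_erase hu))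
      rw [hcard, smul_eq_mul] at hlow
      omega
    have hAcard : 1 ≤ (A S).card := Finset.card_pos.mpr ⟨u0, hu0A⟩
    have hpow : (x + 1 - ex sm Tp) < 2 ^ (x + 1 - ex sm Tp) := Nat.lt_two_pow_self
    -- combine
    have : (Fam.hat S).ncard ≤ 2 ^ (x + 1 - ex sm (t S u0).1) + 2 * ((A S).card - 1) := by
      omega
    omega
  -- sum over D and reindex through the injective map (S, u) ↦ (T₀, u)
  calc ∑ S ∈ D, (Fam.hat S).ncard
      ≤ ∑ S ∈ D, ∑ u ∈ A S, 2 ^ (x + 1 - ex sm (t S u).1) := Finset.sum_le_sum perS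
    _ = ∑ p ∈ D.sigma A, 2 ^ (x + 1 - ex sm (t p.1 p.2).1) := Finset.sum_sigma' D A _
    _ ≤ ∑ q ∈ (Fam.Ex sm x).sigma
          (fun T => (Set.toFinite (Fam.hatx sm x T \ Fam.hatx sm (x + 1) T)).toFinset),
          2 ^ (x + 1 - ex sm q.1) := by
        have hinj : ∀ p ∈ D.sigma A, ∀ q ∈ D.sigma A,
            (Sigma.mk (t p.1 p.2).1 p.2 : (_ : Finset V) × V) =
              Sigma.mk (t q.1 q.2).1 q.2 → p = q := by
          rintro ⟨S₁, u₁⟩ hp ⟨S₂, u₂⟩ hq heq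
          rw [Finset.mem_sigma] at hp hq
          obtain ⟨hT1, hu1⟩ := Sigma.mk.inj_iff.mp heq
          have hu1' : u₁ = u₂ := eq_of_heq hu1
          subst hu1'
          obtain ⟨hP1F, huP1, -, -, hwit1, -⟩ := ht S₁ u₁ hp.1 hp.2
          obtain ⟨hP2F, huP2, -, -, hwit2, -⟩ := ht S₂ u₁ hq.1 hq.2
          rw [hT1] at hwit1 huP1
          have := hIS.SW (t S₂ u₁).1 hP2F.1 u₁ huP2 S₁ S₂ hwit1 hwit2
          simp [this]
        have himg := Finset.sum_image (s := D.sigma A)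
          (g := fun p : (_ : Finset V) × V => (Sigma.mk (t p.1 p.2).1 p.2 : (_ : Finset V) × V))
          (f := fun q : (_ : Finset V) × V => 2 ^ (x + 1 - ex sm q.1)) hinj
        rw [← himg]
        apply Finset.sum_le_sum_of_subset
        intro q hq
        rw [Finset.mem_image] at hq
        obtain ⟨p, hp, hpq⟩ := hq
        rw [Finset.mem_sigma] at hp
        obtain ⟨⟨hF, hex⟩, -, hmx, hnmx, -⟩ := ht p.1 p.2 hp.1 hp.2
        subst hpq
        rw [Finset.mem_sigma]
        exact ⟨mem_Ex.mpr ⟨hF, hex⟩, by rw [Set.Finite.mem_toFinset]; exact ⟨hmx, hnmx⟩⟩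
    _ = ∑ T ∈ Fam.Ex sm x,
          2 ^ (x + 1 - ex sm T) * (Fam.hatx sm x T \ Fam.hatx sm (x + 1) T).ncard := by
        rw [Finset.sum_sigma]
        refine Finset.sum_congr rfl fun T hT => ?_
        rw [Set.ncard_eq_toFinset_card _ (Set.toFinite _)]
        simp [mul_comm]

end VB4
namespace VB5
open ISFamily VB VB2 VB3 VB4

variable {V : Type*} [DecidableEq V] [Fintype V] {Fam : ISFamily V} {sm : Finset V}

lemma hatx_subset {x : ℕ} {S : Finset V} : Fam.hatx sm x S ⊆ Fam.hat S :=
  fun _ hv => hv.1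

lemma hatx_succ_subset {x : ℕ} {S : Finset V} :
    Fam.hatx sm (x + 1) S ⊆ Fam.hatx sm x S := by
  rintro v ⟨hv1, hv2⟩
  refine ⟨hv1, ?_⟩
  rintro ⟨W, hW, h1, h2⟩
  rw [mem_Ex] at hW
  exact hv2 ⟨W, mem_Ex.mpr ⟨hW.1, by omega⟩, h1, h2⟩

lemma Ex_zero (hIS : Fam.IsIS sm) : Fam.Ex sm 0 = {sm} := by
  ext S
  rw [mem_Ex, Finset.mem_singleton]
  constructor
  · rintro ⟨hF, hex⟩
    by_contra hne
    have h1 := hIS.SM sm hIS.sm_mem S hF (hIS.SE S hF hne)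
    unfold ISFamily.ex at hex
    omega
  · rintro rfl
    exact ⟨hIS.sm_mem, by simp [ISFamily.ex]⟩

lemma Ex_succ (x : ℕ) :
    Fam.Ex sm (x + 1) = Fam.Ex sm x ∪ Fam.F.filter (fun S => ex sm S = x + 1) := by
  ext S
  simp only [ISFamily.Ex, Finset.mem_filter, Finset.mem_union]
  constructor
  · rintro ⟨h1, h2⟩
    by_cases h : ex sm S ≤ x
    · exact Or.inl ⟨h1, h⟩
    · exact Or.inr ⟨h1, by omega⟩
  · rintro (⟨h1, h2⟩ | ⟨h1, h2⟩)
    · exact ⟨h1, by omega⟩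
    · exact ⟨h1, by omega⟩

lemma Ex_disj (x : ℕ) :
    Disjoint (Fam.Ex sm x) (Fam.F.filter (fun S => ex sm S = x + 1)) := by
  rw [Finset.disjoint_left]
  intro S h1 h2
  rw [mem_Ex] at h1
  rw [Finset.mem_filter] at h2
  omega

/-- The sum appearing on the right of `key` is at most `2 * M x`. -/
lemma key_rhs_le (x : ℕ) :
    ∑ T ∈ Fam.Ex sm x,
        2 ^ (x + 1 - ex sm T) * (Fam.hatx sm x T \ Fam.hatx sm (x + 1) T).ncard ≤
      2 * Fam.M sm x := by
  unfold ISFamily.M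
  rw [Finset.mul_sum]
  refine Finset.sum_le_sum fun T hT => ?_
  rw [mem_Ex] at hT
  have h1 : 2 ^ (x + 1 - ex sm T) = 2 * 2 ^ (x - ex sm T) := by
    rw [← pow_succ']
    congr 1
    omega
  rw [h1, mul_assoc]
  refine Nat.mul_le_mul_left _ (Nat.mul_le_mul_left _ ?_)
  exact Set.ncard_le_ncard Set.diff_subset (Set.toFinite _)

lemma M_succ_le (hIS : Fam.IsIS sm) (x : ℕ) : Fam.M sm (x + 1) ≤ 2 * Fam.M sm x := by
  have hsplit : Fam.M sm (x + 1) =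
      (∑ S ∈ Fam.Ex sm x, 2 ^ (x + 1 - ex sm S) * (Fam.hatx sm (x + 1) S).ncard) +
      ∑ S ∈ Fam.F.filter (fun S => ex sm S = x + 1),
        2 ^ (x + 1 - ex sm S) * (Fam.hatx sm (x + 1) S).ncard := by
    unfold ISFamily.M
    rw [Ex_succ, Finset.sum_union (Ex_disj x)]
  have hD : ∑ S ∈ Fam.F.filter (fun S => ex sm S = x + 1),
      2 ^ (x + 1 - ex sm S) * (Fam.hatx sm (x + 1) S).ncard ≤
      ∑ S ∈ Fam.F.filter (fun S => ex sm S = x + 1), (Fam.hat S).ncard := by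
    refine Finset.sum_le_sum fun S hS => ?_
    rw [Finset.mem_filter] at hS
    have : x + 1 - ex sm S = 0 := by omega
    rw [this, pow_zero, one_mul]
    exact Set.ncard_le_ncard (hatx_subset.trans (le_refl _)) (Set.toFinite _)
  have hkey := key hIS x
  have hsum : (∑ S ∈ Fam.Ex sm x, 2 ^ (x + 1 - ex sm S) * (Fam.hatx sm (x + 1) S).ncard) +
      ∑ T ∈ Fam.Ex sm x,
        2 ^ (x + 1 - ex sm T) * (Fam.hatx sm x T \ Fam.hatx sm (x + 1) T).ncard =
      ∑ S ∈ Fam.Ex sm x, 2 ^ (x + 1 - ex sm S) * (Fam.hatx sm x S).ncard := by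
    rw [← Finset.sum_add_distrib]
    refine Finset.sum_congr rfl fun S hS => ?_
    rw [← Nat.mul_add]
    congr 1
    rw [Nat.add_comm]
    exact Set.ncard_diff_add_ncard_of_subset hatx_succ_subset (Set.toFinite _)
  have hfin : ∑ S ∈ Fam.Ex sm x, 2 ^ (x + 1 - ex sm S) * (Fam.hatx sm x S).ncard ≤
      2 * Fam.M sm x := by
    unfold ISFamily.M
    rw [Finset.mul_sum]
    refine Finset.sum_le_sum fun S hS => ?_
    rw [mem_Ex] at hS
    have h1 : 2 ^ (x + 1 - ex sm S) = 2 * 2 ^ (x - ex sm S) := by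
      rw [← pow_succ']
      congr 1
      omega
    rw [h1, mul_assoc]
  omega

lemma M_le (hIS : Fam.IsIS sm) (x : ℕ) : Fam.M sm x ≤ 2 ^ x * sm.card := by
  induction x with
  | zero =>
    unfold ISFamily.M
    rw [Ex_zero hIS, Finset.sum_singleton]
    simp only [ISFamily.ex, Nat.sub_self, pow_zero, one_mul]
    have h1 : Fam.hatx sm 0 sm ⊆ ↑sm := fun v hv => (mem_hat.mp hv.1).1
    calc (Fam.hatx sm 0 sm).ncard ≤ (↑sm : Set V).ncard :=
          Set.ncard_le_ncard h1 (Set.toFinite _)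
      _ = sm.card := Set.ncard_coe_finset sm
  | succ n ih =>
    calc Fam.M sm (n + 1) ≤ 2 * Fam.M sm n := M_succ_le hIS n
      _ ≤ 2 * (2 ^ n * sm.card) := Nat.mul_le_mul_left _ ih
      _ = 2 ^ (n + 1) * sm.card := by ring

omit [DecidableEq V] [Fintype V] in
lemma ncard_biUnion_le {α : Type*} [DecidableEq α] (s : Finset α) (f : α → Set V) :
    (⋃ i ∈ s, f i).ncard ≤ ∑ i ∈ s, (f i).ncard := by
  classical
  induction s using Finset.induction_on with
  | empty => simp
  | insert _ _ ha ih =>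
    rename_i a s'
    rw [Finset.sum_insert ha, Finset.set_biUnion_insert]
    calc (f a ∪ ⋃ i ∈ s', f i).ncard ≤ (f a).ncard + (⋃ i ∈ s', f i).ncard :=
          Set.ncard_union_le _ _
      _ ≤ (f a).ncard + ∑ i ∈ s', (f i).ncard := Nat.add_le_add_left ih _

end VB5

open ISFamily in
/-- `|⋃_{S ∈ E_x} S| ≤ 2^{x+1} · |sm(F)|`. -/
theorem vertex_bound {V : Type*} [DecidableEq V] [Fintype V]
    (Fam : ISFamily V) (sm : Finset V) (hIS : Fam.IsIS sm) (x : ℕ) :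
    (⋃ S ∈ Fam.Ex sm x, (↑S : Set V)).ncard ≤ 2 ^ (x + 1) * sm.card := by
  classical
  induction x with
  | zero =>
    rw [VB5.Ex_zero hIS]
    simp only [Finset.mem_singleton, Set.iUnion_iUnion_eq_left, Set.ncard_coe_finset]
    have : (2 : ℕ) ^ (0 + 1) = 2 := by norm_num
    rw [this]
    omega
  | succ n ih =>
    set D := Fam.F.filter (fun S => ex sm S = n + 1) with hD
    have hsub : (⋃ S ∈ Fam.Ex sm (n + 1), (↑S : Set V)) ⊆
        (⋃ S ∈ Fam.Ex sm n, (↑S : Set V)) ∪ ⋃ S ∈ D, Fam.hat S := by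
      intro v hv
      simp only [Set.mem_iUnion, exists_prop] at hv
      obtain ⟨S, hS, hvS⟩ := hv
      rw [VB.mem_Ex] at hS
      obtain ⟨hF, hex⟩ := hS
      by_cases h1 : ex sm S ≤ n
      · left
        simp only [Set.mem_iUnion, exists_prop]
        exact ⟨S, VB.mem_Ex.mpr ⟨hF, h1⟩, hvS⟩
      · by_cases h2 : v ∈ ⋃ S ∈ Fam.Ex sm n, (↑S : Set V)
        · exact Or.inl h2
        · right
          simp only [Set.mem_iUnion, exists_prop]
          refine ⟨S, ?_, ?_⟩
          · rw [hD, Finset.mem_filter]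
            exact ⟨hF, by omega⟩
          · rw [VB.mem_hat]
            refine ⟨hvS, fun Z hZF hZS hvZ => h2 ?_⟩
            simp only [Set.mem_iUnion, exists_prop]
            have := VB.ex_lt hIS hF hZF hZS
            exact ⟨Z, VB.mem_Ex.mpr ⟨hZF, by omega⟩, hvZ⟩
    calc (⋃ S ∈ Fam.Ex sm (n + 1), (↑S : Set V)).ncard
        ≤ ((⋃ S ∈ Fam.Ex sm n, (↑S : Set V)) ∪ ⋃ S ∈ D, Fam.hat S).ncard :=
          Set.ncard_le_ncard hsub (Set.toFinite _)
      _ ≤ (⋃ S ∈ Fam.Ex sm n, (↑S : Set V)).ncard + (⋃ S ∈ D, Fam.hat S).ncard :=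
          Set.ncard_union_le _ _
      _ ≤ 2 ^ (n + 1) * sm.card + ∑ S ∈ D, (Fam.hat S).ncard :=
          Nat.add_le_add ih (VB5.ncard_biUnion_le D _)
      _ ≤ 2 ^ (n + 1) * sm.card + 2 * Fam.M sm n := by
          refine Nat.add_le_add_left (le_trans (VB4.key hIS n) (VB5.key_rhs_le n)) _
      _ ≤ 2 ^ (n + 1) * sm.card + 2 * (2 ^ n * sm.card) :=
          Nat.add_le_add_left (Nat.mul_le_mul_left _ (VB5.M_le hIS n)) _
      _ = 2 ^ (n + 1 + 1) * sm.card := by ring
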